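/- Let ξ and π be pdfs on ℝ with ξ ASU(0) and ξ ⪰_m π. Let φ : ℝ → {0, 1} be measurable, write B₀(φ) = {x ∈ ℝ : φ(x) = 0}, and suppose p := ∫_{B₀(φ)} π(x) dx > 0. Let k ∈ (0, ∞] satisfy ∫_{|x| < k} ξ(x) dx = p. Then the normalized restrictions ξ_θ(x) := 1[|x| < k] ξ(x)/p and π_φ(x) := 1[x ∈ B₀(φ)] π(x)/p are pdfs, ξ_θ is ASU(0), and ξ_θ ⪰_m π_φ. -/

import Mathlib

open MeasureTheory Set
open scoped ENNReal NNReal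

noncomputable section

/-- A probability density function on ℝ: measurable, nonnegative (via `ℝ≥0`),
integrating to one against Lebesgue measure. -/
def IsPdf (f : ℝ → ℝ≥0) : Prop :=
  Measurable f ∧ ∫⁻ x, (f x : ℝ≥0∞) = 1

/-- `f` is symmetric and unimodal about `c`. -/
def ASU (c : ℝ) (f : ℝ → ℝ≥0) : Prop :=
  (∀ x, f (c - x) = f (c + x)) ∧ MonotoneOn f (Iic c) ∧ AntitoneOn f (Ici c)

/-- A distortion function: measurable, even, nondecreasing on `[0, ∞)`. -/
def IsDistortion (d : ℝ → ℝ≥0∞) : Prop :=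
  Measurable d ∧ (∀ x, d (-x) = d x) ∧ MonotoneOn d (Ici (0 : ℝ))

/-- Symmetric decreasing rearrangement of an `ℝ≥0∞`-valued function:
`f^σ(x) = ∫_0^∞ 1[2|x| < vol{z : f z > ρ}] dρ`. -/
def sdr (f : ℝ → ℝ≥0∞) (x : ℝ) : ℝ≥0∞ :=
  ∫⁻ ρ in Ioi (0 : ℝ),
    if ENNReal.ofReal (2 * |x|) < volume {z : ℝ | ENNReal.ofReal ρ < f z} then 1 else 0

/-- Symmetric decreasing rearrangement of an `ℝ≥0`-valued function. -/
def sdr' (f : ℝ → ℝ≥0) : ℝ → ℝ≥0∞ := sdr fun x => (f x : ℝ≥0∞)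

/-- `ξ` majorizes `π`: `∫_{-ρ}^{ρ} ξ^σ ≥ ∫_{-ρ}^{ρ} π^σ` for all `ρ ≥ 0`. -/
def Majorizes (ξ π : ℝ → ℝ≥0) : Prop :=
  ∀ ρ : ℝ, 0 ≤ ρ → ∫⁻ x in Ioo (-ρ) ρ, sdr' π x ≤ ∫⁻ x in Ioo (-ρ) ρ, sdr' ξ x

namespace Prop4Aux

/-- Measure of the superlevel set. -/
def mfun (f : ℝ → ℝ≥0) (t : ℝ) : ℝ≥0∞ := volume {z : ℝ | ENNReal.ofReal t < (f z : ℝ≥0∞)}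

lemma sdr'_eq (f : ℝ → ℝ≥0) (x : ℝ) :
    sdr' f x = ∫⁻ t in Ioi (0 : ℝ),
      if ENNReal.ofReal (2 * |x|) < mfun f t then 1 else 0 := rfl

lemma mfun_antitone (f : ℝ → ℝ≥0) : Antitone (mfun f) := fun _ _ hst =>
  measure_mono fun _ hz => lt_of_le_of_lt (ENNReal.ofReal_le_ofReal hst) hz

lemma mfun_measurable (f : ℝ → ℝ≥0) : Measurable (mfun f) := (mfun_antitone f).measurable

lemma ball_measurableSet (c : ℝ≥0∞) :
    MeasurableSet {x : ℝ | ENNReal.ofReal (2 * |x|) < c} :=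
  measurableSet_lt ((measurable_const.mul measurable_abs).ennreal_ofReal) measurable_const

lemma vol_ball (c : ℝ≥0∞) : volume {x : ℝ | ENNReal.ofReal (2 * |x|) < c} = c := by
  rcases eq_or_ne c ∞ with rfl | hc
  · have h : {x : ℝ | ENNReal.ofReal (2 * |x|) < ∞} = univ :=
      eq_univ_of_forall fun x => ENNReal.ofReal_lt_top
    rw [h, Real.volume_univ]
  · lift c to ℝ≥0 using hc
    have hset : {x : ℝ | ENNReal.ofReal (2 * |x|) < (c : ℝ≥0∞)}
        = Ioo (-((c : ℝ) / 2)) ((c : ℝ) / 2) := by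
      ext x
      simp only [mem_setOf_eq, mem_Ioo, ← ENNReal.ofReal_coe_nnreal,
        ENNReal.ofReal_lt_ofReal_iff_of_nonneg (by positivity : (0:ℝ) ≤ 2 * |x|)]
      rw [show ((2:ℝ) * |x| < (c:ℝ) ↔ |x| < (c:ℝ) / 2) from by constructor <;> intro <;> linarith,
        abs_lt]
    rw [hset, Real.volume_Ioo,
      show (c:ℝ) / 2 - -((c:ℝ) / 2) = (c:ℝ) from by ring, ENNReal.ofReal_coe_nnreal]

lemma lintegral_ite_ball (d : ℝ≥0∞) :
    ∫⁻ x : ℝ, (if ENNReal.ofReal (2 * |x|) < d then (1:ℝ≥0∞) else 0) = d := by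
  have h : (fun x : ℝ => if ENNReal.ofReal (2 * |x|) < d then (1:ℝ≥0∞) else 0)
      = ({x : ℝ | ENNReal.ofReal (2 * |x|) < d}).indicator fun _ => (1:ℝ≥0∞) := by
    funext x
    by_cases hx : ENNReal.ofReal (2 * |x|) < d
    · rw [if_pos hx, indicator_of_mem (show x ∈ {x : ℝ | ENNReal.ofReal (2 * |x|) < d} from hx)]
    · rw [if_neg hx, indicator_of_notMem
        (show x ∉ {x : ℝ | ENNReal.ofReal (2 * |x|) < d} from hx)]
  rw [h, lintegral_indicator (ball_measurableSet d), setLIntegral_one, vol_ball]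

lemma uncurry_meas (f : ℝ → ℝ≥0) :
    Measurable (Function.uncurry fun (x t : ℝ) =>
      if ENNReal.ofReal (2 * |x|) < mfun f t then (1:ℝ≥0∞) else 0) := by
  have hs : MeasurableSet {q : ℝ × ℝ | ENNReal.ofReal (2 * |q.1|) < mfun f q.2} :=
    measurableSet_lt
      ((measurable_const.mul (measurable_abs.comp measurable_fst)).ennreal_ofReal)
      ((mfun_measurable f).comp measurable_snd)
  exact Measurable.ite hs measurable_const measurable_const

lemma sdr'_measurable (f : ℝ → ℝ≥0) : Measurable (sdr' f) :=
  (uncurry_meas f).lintegral_prod_right (ν := volume.restrict (Ioi (0:ℝ)))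

lemma lintegral_sdr' (f : ℝ → ℝ≥0) (hf : Measurable f) :
    ∫⁻ x, sdr' f x = ∫⁻ x, (f x : ℝ≥0∞) := by
  have hswap : ∫⁻ x, sdr' f x
      = ∫⁻ t in Ioi (0:ℝ), ∫⁻ x : ℝ,
          (if ENNReal.ofReal (2 * |x|) < mfun f t then (1:ℝ≥0∞) else 0) :=
    lintegral_lintegral_swap ((uncurry_meas f).aemeasurable)
  rw [hswap, lintegral_congr fun t => lintegral_ite_ball (mfun f t)]
  have hlc := lintegral_eq_lintegral_meas_lt volume (f := fun x => ((f x : ℝ)))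
      (ae_of_all _ fun x => (f x).coe_nonneg)
      ((measurable_coe_nnreal_real.comp hf).aemeasurable)
  have h3 : ∫⁻ x, (f x : ℝ≥0∞) = ∫⁻ x, ENNReal.ofReal ((f x : ℝ)) := by
    simp [ENNReal.ofReal_coe_nnreal]
  rw [h3, hlc]
  refine setLIntegral_congr_fun measurableSet_Ioi (fun t ht => ?_)
  unfold mfun
  congr 1
  ext z
  simp only [mem_setOf_eq]
  rw [← ENNReal.ofReal_coe_nnreal,
    ENNReal.ofReal_lt_ofReal_iff_of_nonneg (le_of_lt ht)]

lemma sdr'_mono {f g : ℝ → ℝ≥0} (h : ∀ z, f z ≤ g z) (x : ℝ) : sdr' f x ≤ sdr' g x := by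
  rw [sdr'_eq, sdr'_eq]
  refine lintegral_mono fun t => ?_
  have hm : mfun f t ≤ mfun g t :=
    measure_mono fun z hz => lt_of_lt_of_le hz (ENNReal.coe_le_coe.mpr (h z))
  by_cases h1 : ENNReal.ofReal (2 * |x|) < mfun f t
  · rw [if_pos h1, if_pos (lt_of_lt_of_le h1 hm)]
  · rw [if_neg h1]; exact zero_le

lemma lintegral_Ioi_comp_mul {g : ℝ → ℝ≥0∞} (hg : Measurable g) {a : ℝ} (ha : 0 < a) :
    ∫⁻ t in Ioi (0:ℝ), g (a * t) = ENNReal.ofReal a⁻¹ * ∫⁻ u in Ioi (0:ℝ), g u := by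
  have hpre : ((a * ·) ⁻¹' Ioi (0:ℝ)) = Ioi (0:ℝ) := by
    ext t
    simp only [mem_preimage, mem_Ioi]
    exact ⟨fun h => by nlinarith, fun h => mul_pos ha h⟩
  have hmap : (Measure.map (a * ·) volume).restrict (Ioi (0:ℝ))
      = Measure.map (a * ·) (volume.restrict (Ioi (0:ℝ))) := by
    rw [Measure.restrict_map (measurable_const_mul a) measurableSet_Ioi, hpre]
  have hsc : ∫⁻ u in Ioi (0:ℝ), g u ∂(Measure.map (a * ·) volume)
      = ENNReal.ofReal a⁻¹ * ∫⁻ u in Ioi (0:ℝ), g u := by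
    rw [Real.map_volume_mul_left ha.ne', Measure.restrict_smul, lintegral_smul_measure,
      abs_of_pos (inv_pos.mpr ha), smul_eq_mul]
  rw [← hsc, hmap, lintegral_map hg (measurable_const_mul a)]

lemma sdr'_div (f : ℝ → ℝ≥0) {q : ℝ≥0} (hq : q ≠ 0) (x : ℝ) :
    sdr' (fun z => f z / q) x = (q : ℝ≥0∞)⁻¹ * sdr' f x := by
  have hqpos : (0:ℝ) < (q:ℝ) := NNReal.coe_pos.mpr (zero_lt_iff.mpr hq)
  have hkey : ∀ t : ℝ, mfun (fun z => f z / q) t = mfun f ((q:ℝ) * t) := by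
    intro t
    unfold mfun
    congr 1
    ext z
    simp only [mem_setOf_eq]
    rw [ENNReal.coe_div hq,
      ENNReal.lt_div_iff_mul_lt (Or.inl (by exact_mod_cast hq)) (Or.inl ENNReal.coe_ne_top),
      ENNReal.ofReal_mul (le_of_lt hqpos), ENNReal.ofReal_coe_nnreal,
      mul_comm (ENNReal.ofReal t) (q : ℝ≥0∞)]
  have hg : Measurable fun u : ℝ =>
      if ENNReal.ofReal (2 * |x|) < mfun f u then (1:ℝ≥0∞) else 0 :=
    Measurable.ite (measurableSet_lt measurable_const (mfun_measurable f))
      measurable_const measurable_const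
  rw [sdr'_eq]
  calc ∫⁻ t in Ioi (0:ℝ),
        (if ENNReal.ofReal (2 * |x|) < mfun (fun z => f z / q) t then (1:ℝ≥0∞) else 0)
      = ∫⁻ t in Ioi (0:ℝ),
        (if ENNReal.ofReal (2 * |x|) < mfun f ((q:ℝ) * t) then (1:ℝ≥0∞) else 0) :=
        lintegral_congr fun t => by rw [hkey t]
    _ = ENNReal.ofReal ((q:ℝ))⁻¹ * ∫⁻ u in Ioi (0:ℝ),
        (if ENNReal.ofReal (2 * |x|) < mfun f u then (1:ℝ≥0∞) else 0) :=
        lintegral_Ioi_comp_mul hg hqpos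
    _ = (q : ℝ≥0∞)⁻¹ * sdr' f x := by
        rw [← sdr'_eq, ENNReal.ofReal_inv_of_pos hqpos, ENNReal.ofReal_coe_nnreal]

lemma ASU.anti_abs {ξ : ℝ → ℝ≥0} (h : ASU 0 ξ) {w z : ℝ} (hwz : |w| ≤ |z|) : ξ z ≤ ξ w := by
  obtain ⟨hs, _, hanti⟩ := h
  have habs : ∀ y : ℝ, ξ y = ξ |y| := by
    intro y
    rcases abs_choice y with hy | hy
    · rw [hy]
    · rw [hy]
      have h' := hs y
      simp only [zero_sub, zero_add] at h'
      exact h'.symm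
  rw [habs w, habs z]
  exact hanti (abs_nonneg w) ((abs_nonneg w).trans hwz) hwz

lemma sdr'_restrict_ge (ξ : ℝ → ℝ≥0) (hξA : ASU 0 ξ) (q : ℝ≥0) (k : ℝ≥0∞)
    {x : ℝ} (hx : ENNReal.ofReal |x| < k) :
    sdr' (fun z => ξ z / q) x
      ≤ sdr' (fun z => if ENNReal.ofReal |z| < k then ξ z / q else 0) x := by
  rw [sdr'_eq, sdr'_eq]
  refine lintegral_mono fun t => ?_
  by_cases h1 : ENNReal.ofReal (2 * |x|) < mfun (fun z => ξ z / q) t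
  swap
  · rw [if_neg h1]; exact zero_le
  rw [if_pos h1]
  have h2k : ENNReal.ofReal (2 * |x|) < 2 * k := by
    calc ENNReal.ofReal (2 * |x|) = 2 * ENNReal.ofReal |x| := by
          rw [ENNReal.ofReal_mul (by norm_num : (0:ℝ) ≤ 2), ENNReal.ofReal_ofNat]
    _ < 2 * k := by
          rw [ENNReal.mul_lt_mul_iff_right (by norm_num) (by norm_num)]
          exact hx
  have hmin : ENNReal.ofReal (2 * |x|) < min (mfun (fun z => ξ z / q) t) (2 * k) :=
    lt_min h1 h2k
  obtain ⟨r, hr0, hrl, hru⟩ := ENNReal.lt_iff_exists_real_btwn.mp hmin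
  have hruS : ENNReal.ofReal r < mfun (fun z => ξ z / q) t := hru.trans_le (min_le_left _ _)
  have hruK : ENNReal.ofReal r < 2 * k := hru.trans_le (min_le_right _ _)
  have hy : ∃ y : ℝ, ENNReal.ofReal t < ((ξ y / q : ℝ≥0) : ℝ≥0∞) ∧ r / 2 ≤ |y| := by
    by_contra hcon
    push_neg at hcon
    have hsub : {z : ℝ | ENNReal.ofReal t < ((ξ z / q : ℝ≥0) : ℝ≥0∞)}
        ⊆ Icc (-(r/2)) (r/2) := by
      intro z hz
      have hz2 := hcon z hz
      rw [mem_Icc]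
      constructor
      · linarith [neg_abs_le z]
      · linarith [le_abs_self z]
    have hle : mfun (fun z => ξ z / q) t ≤ ENNReal.ofReal r := by
      calc mfun (fun z => ξ z / q) t ≤ volume (Icc (-(r/2)) (r/2)) := measure_mono hsub
      _ = ENNReal.ofReal r := by rw [Real.volume_Icc]; congr 1; ring
    exact absurd hruS (not_lt.mpr hle)
  obtain ⟨y, hyS, hyr⟩ := hy
  have hq2 : ENNReal.ofReal (r/2) < k := by
    have h2r : (2:ℝ≥0∞) * ENNReal.ofReal (r/2) = ENNReal.ofReal r := by
      rw [← ENNReal.ofReal_ofNat 2, ← ENNReal.ofReal_mul (by norm_num : (0:ℝ) ≤ 2)]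
      congr 1; ring
    have h' := hruK
    rw [← h2r] at h'
    exact (ENNReal.mul_lt_mul_iff_right (by norm_num) (by norm_num)).mp h'
  have hball : Ioo (-(r/2)) (r/2)
      ⊆ {z : ℝ | ENNReal.ofReal t
          < ((if ENNReal.ofReal |z| < k then ξ z / q else 0 : ℝ≥0) : ℝ≥0∞)} := by
    intro z hz
    have hzabs : |z| < r / 2 := abs_lt.mpr ⟨hz.1, hz.2⟩
    have hzk : ENNReal.ofReal |z| < k :=
      lt_of_le_of_lt (ENNReal.ofReal_le_ofReal hzabs.le) hq2
    simp only [mem_setOf_eq, if_pos hzk]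
    have hle : ξ y ≤ ξ z := ASU.anti_abs hξA (le_trans hzabs.le hyr)
    calc ENNReal.ofReal t < ((ξ y / q : ℝ≥0) : ℝ≥0∞) := hyS
      _ ≤ ((ξ z / q : ℝ≥0) : ℝ≥0∞) := by
          refine ENNReal.coe_le_coe.mpr ?_
          rw [div_eq_mul_inv, div_eq_mul_inv]
          exact mul_le_mul_left hle _
  have hfin : ENNReal.ofReal r
      ≤ mfun (fun z => if ENNReal.ofReal |z| < k then ξ z / q else 0) t := by
    calc ENNReal.ofReal r = volume (Ioo (-(r/2)) (r/2)) := by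
          rw [Real.volume_Ioo]; congr 1; ring
      _ ≤ _ := measure_mono hball
  rw [if_pos (lt_of_lt_of_le hrl hfin)]

lemma sdr'_restrict_zero (ξ : ℝ → ℝ≥0) (q : ℝ≥0) (k : ℝ≥0∞)
    {x : ℝ} (hx : k ≤ ENNReal.ofReal |x|) :
    sdr' (fun z => if ENNReal.ofReal |z| < k then ξ z / q else 0) x = 0 := by
  rw [sdr'_eq]
  have hbound : ∀ t : ℝ,
      mfun (fun z => if ENNReal.ofReal |z| < k then ξ z / q else 0) t
        ≤ ENNReal.ofReal (2 * |x|) := by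
    intro t
    have hsub : {z : ℝ | ENNReal.ofReal t
        < ((if ENNReal.ofReal |z| < k then ξ z / q else 0 : ℝ≥0) : ℝ≥0∞)}
        ⊆ {z : ℝ | |z| < |x|} := by
      intro z hz
      simp only [mem_setOf_eq] at hz ⊢
      by_contra hcon
      push_neg at hcon
      have hzk : ¬ (ENNReal.ofReal |z| < k) :=
        not_lt.mpr (hx.trans (ENNReal.ofReal_le_ofReal hcon))
      rw [if_neg hzk] at hz
      simp at hz
    calc mfun (fun z => if ENNReal.ofReal |z| < k then ξ z / q else 0) t
        ≤ volume {z : ℝ | |z| < |x|} := measure_mono hsub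
      _ = ENNReal.ofReal (2 * |x|) := by
          rw [show {z : ℝ | |z| < |x|} = Ioo (-|x|) |x| from by ext z; simp [abs_lt],
            Real.volume_Ioo]
          congr 1; ring
  have hz : ∀ t : ℝ,
      (if ENNReal.ofReal (2 * |x|)
          < mfun (fun z => if ENNReal.ofReal |z| < k then ξ z / q else 0) t
        then (1:ℝ≥0∞) else 0) = 0 := by
    intro t
    rw [if_neg (not_lt.mpr (hbound t))]
  rw [lintegral_congr hz, lintegral_zero]

end Prop4Aux

open Prop4Aux

/-- Property 4 (c = 0): if `ξ` is ASU(0) and majorizes `π`, and `θ` is the threshold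
prescription around 0 with no-transmission probability under `ξ` matched to that of
`φ` under `π`, then the conditioned beliefs are pdfs, `ξ_θ` is ASU(0), and
`ξ_θ` majorizes `π_φ`. -/
theorem stmt4 (ξ π : ℝ → ℝ≥0) (hξ : IsPdf ξ) (hπ : IsPdf π)
    (hξA : ASU 0 ξ) (hmaj : Majorizes ξ π)
    (φ : ℝ → Bool) (hφ : Measurable φ)
    (p : ℝ≥0∞) (hp : p = ∫⁻ x in {x : ℝ | φ x = false}, (π x : ℝ≥0∞)) (hp0 : 0 < p)
    (k : ℝ≥0∞) (hk0 : 0 < k)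
    (hk : ∫⁻ x in {x : ℝ | ENNReal.ofReal |x| < k}, (ξ x : ℝ≥0∞) = p) :
    IsPdf (fun x => if ENNReal.ofReal |x| < k then ξ x / p.toNNReal else 0) ∧
    IsPdf (fun x => if φ x = false then π x / p.toNNReal else 0) ∧
    ASU 0 (fun x => if ENNReal.ofReal |x| < k then ξ x / p.toNNReal else 0) ∧
    Majorizes (fun x => if ENNReal.ofReal |x| < k then ξ x / p.toNNReal else 0)
      (fun x => if φ x = false then π x / p.toNNReal else 0) := by
  obtain ⟨hξm, hξ1⟩ := hξ
  obtain ⟨hπm, hπ1⟩ := hπ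
  set q := p.toNNReal with hqdef
  have hple : p ≤ 1 := by rw [hp, ← hπ1]; exact setLIntegral_le_lintegral _ _
  have hptop : p ≠ ⊤ := ne_top_of_le_ne_top ENNReal.one_ne_top hple
  have hq : (q : ℝ≥0∞) = p := ENNReal.coe_toNNReal hptop
  have hq0 : q ≠ 0 := by
    intro h
    rw [← hq, h] at hp0
    simp at hp0
  have hballm : MeasurableSet {x : ℝ | ENNReal.ofReal |x| < k} :=
    measurableSet_lt (measurable_abs.ennreal_ofReal) measurable_const
  have hφm : MeasurableSet {x : ℝ | φ x = false} := hφ (measurableSet_singleton false)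
  have hξdivm : Measurable fun z => ξ z / q := by
    have h : (fun z => ξ z / q) = fun z => ξ z * q⁻¹ := funext fun z => div_eq_mul_inv _ _
    rw [h]; exact hξm.mul measurable_const
  have hπdivm : Measurable fun z => π z / q := by
    have h : (fun z => π z / q) = fun z => π z * q⁻¹ := funext fun z => div_eq_mul_inv _ _
    rw [h]; exact hπm.mul measurable_const
  have hξθm : Measurable fun x => if ENNReal.ofReal |x| < k then ξ x / q else 0 :=
    Measurable.ite hballm hξdivm measurable_const
  have hπφm : Measurable fun x => if φ x = false then π x / q else 0 :=
    Measurable.ite hφm hπdivm measurable_const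
  have hinvtop : p⁻¹ ≠ ⊤ := ENNReal.inv_ne_top.mpr hp0.ne'
  have hξθ1 : ∫⁻ x, ((if ENNReal.ofReal |x| < k then ξ x / q else 0 : ℝ≥0) : ℝ≥0∞) = 1 := by
    have heq : ∀ x : ℝ, ((if ENNReal.ofReal |x| < k then ξ x / q else 0 : ℝ≥0) : ℝ≥0∞)
        = ({x : ℝ | ENNReal.ofReal |x| < k}).indicator (fun x => (ξ x : ℝ≥0∞) * p⁻¹) x := by
      intro x
      by_cases hx : ENNReal.ofReal |x| < k
      · rw [if_pos hx, indicator_of_mem (show x ∈ {x : ℝ | ENNReal.ofReal |x| < k} from hx),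
          ENNReal.coe_div hq0, hq, div_eq_mul_inv]
      · rw [if_neg hx, indicator_of_notMem
          (show x ∉ {x : ℝ | ENNReal.ofReal |x| < k} from hx), ENNReal.coe_zero]
    rw [lintegral_congr heq, lintegral_indicator hballm,
      lintegral_mul_const' p⁻¹ _ hinvtop, hk, ENNReal.mul_inv_cancel hp0.ne' hptop]
  have hπφ1 : ∫⁻ x, ((if φ x = false then π x / q else 0 : ℝ≥0) : ℝ≥0∞) = 1 := by
    have heq : ∀ x : ℝ, ((if φ x = false then π x / q else 0 : ℝ≥0) : ℝ≥0∞)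
        = ({x : ℝ | φ x = false}).indicator (fun x => (π x : ℝ≥0∞) * p⁻¹) x := by
      intro x
      by_cases hx : φ x = false
      · rw [if_pos hx, indicator_of_mem (show x ∈ {x : ℝ | φ x = false} from hx),
          ENNReal.coe_div hq0, hq, div_eq_mul_inv]
      · rw [if_neg hx, indicator_of_notMem
          (show x ∉ {x : ℝ | φ x = false} from hx), ENNReal.coe_zero]
    rw [lintegral_congr heq, lintegral_indicator hφm,
      lintegral_mul_const' p⁻¹ _ hinvtop, ← hp, ENNReal.mul_inv_cancel hp0.ne' hptop]
  have hASU : ASU 0 (fun x => if ENNReal.ofReal |x| < k then ξ x / q else 0) := by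
    obtain ⟨hs, hmono, hanti⟩ := hξA
    refine ⟨fun x => ?_, ?_, ?_⟩
    · simp only [zero_sub, zero_add, abs_neg]
      rw [show ξ (-x) = ξ x from by simpa using hs x]
    · intro a ha b hb hab
      simp only [mem_Iic] at ha hb
      simp only
      have habs : |b| ≤ |a| := by rw [abs_of_nonpos ha, abs_of_nonpos hb]; linarith
      by_cases hx : ENNReal.ofReal |a| < k
      · rw [if_pos hx, if_pos (lt_of_le_of_lt (ENNReal.ofReal_le_ofReal habs) hx),
          div_eq_mul_inv, div_eq_mul_inv]
        exact mul_le_mul_left (hmono ha hb hab) _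
      · rw [if_neg hx]; exact zero_le
    · intro a ha b hb hab
      simp only [mem_Ici] at ha hb
      simp only
      have habs : |a| ≤ |b| := by rw [abs_of_nonneg ha, abs_of_nonneg hb]; exact hab
      by_cases hx : ENNReal.ofReal |b| < k
      · rw [if_pos hx, if_pos (lt_of_le_of_lt (ENNReal.ofReal_le_ofReal habs) hx),
          div_eq_mul_inv, div_eq_mul_inv]
        exact mul_le_mul_left (hanti ha hb hab) _
      · rw [if_neg hx]; exact zero_le
  refine ⟨⟨hξθm, hξθ1⟩, ⟨hπφm, hπφ1⟩, hASU, ?_⟩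
  intro ρ hρ
  by_cases hcase : k ≤ ENNReal.ofReal ρ
  · calc ∫⁻ x in Ioo (-ρ) ρ, sdr' (fun x => if φ x = false then π x / q else 0) x
        ≤ ∫⁻ x, sdr' (fun x => if φ x = false then π x / q else 0) x :=
          setLIntegral_le_lintegral _ _
      _ = 1 := by rw [lintegral_sdr' _ hπφm]; exact hπφ1
      _ = ∫⁻ x, sdr' (fun x => if ENNReal.ofReal |x| < k then ξ x / q else 0) x := by
          rw [lintegral_sdr' _ hξθm]; exact hξθ1.symm
      _ = ∫⁻ x in Ioo (-ρ) ρ,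
            sdr' (fun x => if ENNReal.ofReal |x| < k then ξ x / q else 0) x := by
          rw [← lintegral_indicator measurableSet_Ioo]
          refine lintegral_congr fun x => ?_
          by_cases hx : x ∈ Ioo (-ρ) ρ
          · rw [indicator_of_mem hx]
          · rw [indicator_of_notMem hx]
            refine sdr'_restrict_zero ξ q k ?_
            refine le_trans hcase (ENNReal.ofReal_le_ofReal ?_)
            simp only [mem_Ioo, not_and, not_lt] at hx
            rcases le_or_gt x (-ρ) with h | h
            · exact le_abs.mpr (Or.inr (by linarith))
            · exact le_abs.mpr (Or.inl (hx h))
  · push_neg at hcase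
    have hms : Measurable (sdr' fun x => if ENNReal.ofReal |x| < k then ξ x / q else 0) :=
      sdr'_measurable _
    have hle1 : ∀ x, sdr' (fun x => if φ x = false then π x / q else 0) x
        ≤ p⁻¹ * sdr' π x := by
      intro x
      have h1 : sdr' (fun x => if φ x = false then π x / q else 0) x
          ≤ sdr' (fun z => π z / q) x := by
        refine sdr'_mono (fun z => ?_) x
        by_cases hz : φ z = false
        · rw [if_pos hz]
        · rw [if_neg hz]; exact zero_le
      rw [← hq]
      exact h1.trans (le_of_eq (sdr'_div π hq0 x))
    calc ∫⁻ x in Ioo (-ρ) ρ, sdr' (fun x => if φ x = false then π x / q else 0) x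
        ≤ ∫⁻ x in Ioo (-ρ) ρ, p⁻¹ * sdr' π x := lintegral_mono fun x => hle1 x
      _ = p⁻¹ * ∫⁻ x in Ioo (-ρ) ρ, sdr' π x := lintegral_const_mul' _ _ hinvtop
      _ ≤ p⁻¹ * ∫⁻ x in Ioo (-ρ) ρ, sdr' ξ x := mul_le_mul_right (hmaj ρ hρ) _
      _ = ∫⁻ x in Ioo (-ρ) ρ, p⁻¹ * sdr' ξ x := (lintegral_const_mul' _ _ hinvtop).symm
      _ ≤ ∫⁻ x in Ioo (-ρ) ρ,
            sdr' (fun x => if ENNReal.ofReal |x| < k then ξ x / q else 0) x := by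
          refine setLIntegral_mono hms fun x hx => ?_
          have hxk : ENNReal.ofReal |x| < k :=
            lt_of_le_of_lt (ENNReal.ofReal_le_ofReal (abs_le.mpr ⟨hx.1.le, hx.2.le⟩)) hcase
          have h2 := sdr'_restrict_ge ξ ⟨hξA.1, hξA.2.1, hξA.2.2⟩ q k hxk
          rw [← hq, ← sdr'_div ξ hq0 x]
          exact h2
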